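/- The set of essential values Ess(T_f) of a real-valued cocycle f over an ergodic invertible measure-preserving transformation T of a probability space is a closed subgroup of ℝ. -/

import Mathlib

open MeasureTheory

variable {X : Type*} [MeasurableSpace X]

/-- Birkhoff sums `S_n f` for `n ∈ ℤ` over an invertible transformation. -/
noncomputable def birkhoffZ (T : Equiv.Perm X) (f : X → ℝ) (n : ℤ) (x : X) : ℝ :=
  if 0 ≤ n then ∑ k ∈ Finset.range n.toNat, f ((T ^ (k : ℤ)) x)
  else -∑ k ∈ Finset.range (-n).toNat, f ((T ^ (-(k : ℤ) - 1)) x)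

/-- The set of essential values of the cocycle `f` over `T`. -/
def essentialValues (μ : Measure X) (T : Equiv.Perm X) (f : X → ℝ) : Set ℝ :=
  {a : ℝ | ∀ B : Set X, MeasurableSet B → μ B ≠ 0 → ∀ ε : ℝ, 0 < ε → ∃ n : ℤ,
    μ (B ∩ (⇑(T ^ n)) ⁻¹' B ∩ {x : X | |birkhoffZ T f n x - a| < ε}) ≠ 0}

lemma birkhoffZ_zero (T : Equiv.Perm X) (f : X → ℝ) (x : X) : birkhoffZ T f 0 x = 0 := by
  simp [birkhoffZ]

lemma birkhoffZ_nonpos (T : Equiv.Perm X) (f : X → ℝ) {n : ℤ} (hn : n ≤ 0) (x : X) :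
    birkhoffZ T f n x = -∑ k ∈ Finset.range (-n).toNat, f ((T ^ (-(k : ℤ) - 1)) x) := by
  rcases eq_or_lt_of_le hn with h | h
  · subst h; simp [birkhoffZ]
  · rw [birkhoffZ, if_neg (by omega)]

lemma birkhoffZ_succ (T : Equiv.Perm X) (f : X → ℝ) (n : ℤ) (x : X) :
    birkhoffZ T f (n + 1) x = birkhoffZ T f n x + f ((T ^ n) x) := by
  rcases le_or_gt 0 n with hn | hn
  · rw [birkhoffZ, if_pos (by omega), birkhoffZ, if_pos hn]
    have h : (n + 1).toNat = n.toNat + 1 := by omega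
    rw [h, Finset.sum_range_succ, Int.toNat_of_nonneg hn]
  · rw [birkhoffZ_nonpos T f (by omega) x, birkhoffZ_nonpos T f (by omega) x]
    have h : (-n).toNat = (-(n + 1)).toNat + 1 := by omega
    rw [h, Finset.sum_range_succ]
    have h2 : (-(((-(n + 1)).toNat : ℤ)) - 1) = n := by omega
    rw [h2]
    ring

lemma birkhoffZ_add (T : Equiv.Perm X) (f : X → ℝ) (m n : ℤ) (x : X) :
    birkhoffZ T f (m + n) x = birkhoffZ T f m x + birkhoffZ T f n ((T ^ m) x) := by
  have key : ∀ k : ℤ, (T ^ (m + k)) x = (T ^ k) ((T ^ m) x) := by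
    intro k
    rw [add_comm, zpow_add]
    rfl
  induction n using Int.induction_on with
  | zero => simp [birkhoffZ_zero]
  | succ k ih =>
      have h1 : m + ((k : ℤ) + 1) = (m + k) + 1 := by ring
      rw [h1, birkhoffZ_succ, ih, birkhoffZ_succ, key]
      ring
  | pred k ih =>
      have h1 := birkhoffZ_succ T f (m + (-(k : ℤ) - 1)) x
      have h2 := birkhoffZ_succ T f (-(k : ℤ) - 1) ((T ^ m) x)
      have h3 : m + (-(k : ℤ) - 1) + 1 = m + -(k : ℤ) := by ring
      have h4 : (-(k : ℤ) - 1) + 1 = -(k : ℤ) := by ring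
      rw [h3] at h1
      rw [h4] at h2
      rw [key] at h1
      have h5 : m + (-(k : ℤ) - 1) = m + -(k : ℤ) - 1 := by ring
      rw [h5] at h1 ⊢
      linarith [ih]

lemma measurable_perm_zpow (T : Equiv.Perm X) (hTmeas : Measurable ⇑T)
    (hTinvmeas : Measurable ⇑T⁻¹) (n : ℤ) : Measurable ⇑(T ^ n) := by
  induction n using Int.induction_on with
  | zero => simpa using measurable_id
  | succ k ih =>
      have : (T ^ ((k : ℤ) + 1)) = T ^ (k : ℤ) * T := by rw [zpow_add_one]
      rw [this, Equiv.Perm.coe_mul]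
      exact ih.comp hTmeas
  | pred k ih =>
      have : (T ^ (-(k : ℤ) - 1)) = T ^ (-(k : ℤ)) * T⁻¹ := by rw [zpow_sub_one]
      rw [this, Equiv.Perm.coe_mul]
      exact ih.comp hTinvmeas

lemma measurable_birkhoffZ (T : Equiv.Perm X) (hTmeas : Measurable ⇑T)
    (hTinvmeas : Measurable ⇑T⁻¹) (f : X → ℝ) (hfmeas : Measurable f) (n : ℤ) :
    Measurable (birkhoffZ T f n) := by
  unfold birkhoffZ
  split_ifs
  · exact Finset.measurable_sum _ fun k _ =>
      hfmeas.comp (measurable_perm_zpow T hTmeas hTinvmeas _)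
  · exact (Finset.measurable_sum _ fun k _ =>
      hfmeas.comp (measurable_perm_zpow T hTmeas hTinvmeas _)).neg

lemma measurePreserving_perm_zpow (μ : Measure X) (T : Equiv.Perm X)
    (hTmeas : Measurable ⇑T) (hTinvmeas : Measurable ⇑T⁻¹)
    (hTpres : MeasurePreserving T μ μ) (n : ℤ) : MeasurePreserving ⇑(T ^ n) μ μ := by
  have hinv : MeasurePreserving ⇑T⁻¹ μ μ := by
    let e : X ≃ᵐ X := ⟨T, hTmeas, hTinvmeas⟩
    exact MeasurePreserving.symm e hTpres
  induction n using Int.induction_on with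
  | zero => simpa using MeasurePreserving.id μ
  | succ k ih =>
      have : (T ^ ((k : ℤ) + 1)) = T ^ (k : ℤ) * T := by rw [zpow_add_one]
      rw [this, Equiv.Perm.coe_mul]
      exact ih.comp hTpres
  | pred k ih =>
      have : (T ^ (-(k : ℤ) - 1)) = T ^ (-(k : ℤ)) * T⁻¹ := by rw [zpow_sub_one]
      rw [this, Equiv.Perm.coe_mul]
      exact ih.comp hinv

/-- The set of essential values of a measurable cocycle over an ergodic invertible
measure-preserving transformation of a probability space is a closed subgroup of `ℝ`. -/
theorem essentialValues_closed_subgroup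
    (μ : Measure X) [IsProbabilityMeasure μ]
    (T : Equiv.Perm X) (hTmeas : Measurable ⇑T) (hTinvmeas : Measurable ⇑T⁻¹)
    (hTpres : MeasurePreserving T μ μ) (hTerg : Ergodic T μ)
    (f : X → ℝ) (hfmeas : Measurable f) :
    IsClosed (essentialValues μ T f) ∧
      ∃ H : AddSubgroup ℝ, (H : Set ℝ) = essentialValues μ T f := by
  have hzpow : ∀ n : ℤ, Measurable ⇑(T ^ n) :=
    measurable_perm_zpow T hTmeas hTinvmeas
  have hbirk : ∀ n : ℤ, Measurable (birkhoffZ T f n) :=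
    measurable_birkhoffZ T hTmeas hTinvmeas f hfmeas
  have hmp : ∀ n : ℤ, MeasurePreserving ⇑(T ^ n) μ μ :=
    measurePreserving_perm_zpow μ T hTmeas hTinvmeas hTpres
  -- closedness
  have hclosed : IsClosed (essentialValues μ T f) := by
    apply isClosed_of_closure_subset
    intro a ha
    intro B hB hBpos ε hε
    rcases Metric.mem_closure_iff.mp ha (ε / 2) (by linarith) with ⟨b, hb, hab⟩
    rcases hb B hB hBpos (ε / 2) (by linarith) with ⟨n, hn⟩
    refine ⟨n, fun h0 => hn (measure_mono_null ?_ h0)⟩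
    intro x hx
    refine ⟨hx.1, ?_⟩
    have h1 : |birkhoffZ T f n x - b| < ε / 2 := hx.2
    have h2 : dist a b < ε / 2 := hab
    rw [Real.dist_eq] at h2
    simp only [Set.mem_setOf_eq]
    calc |birkhoffZ T f n x - a| ≤ |birkhoffZ T f n x - b| + |b - a| := by
          have := abs_sub_abs_le_abs_sub (birkhoffZ T f n x - b) (a - b)
          calc |birkhoffZ T f n x - a| = |(birkhoffZ T f n x - b) + (b - a)| := by ring_nf
            _ ≤ |birkhoffZ T f n x - b| + |b - a| := abs_add_le _ _
      _ < ε := by rw [abs_sub_comm b a] at *; linarith [h1, h2]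
  -- zero
  have hzero : (0 : ℝ) ∈ essentialValues μ T f := by
    intro B hB hBpos ε hε
    refine ⟨0, ?_⟩
    have : B ∩ (⇑(T ^ (0 : ℤ))) ⁻¹' B ∩ {x : X | |birkhoffZ T f 0 x - 0| < ε} = B := by
      ext x
      simp [birkhoffZ_zero, abs_of_nonneg, hε]
    rw [this]
    exact hBpos
  -- negation
  have hneg : ∀ a ∈ essentialValues μ T f, -a ∈ essentialValues μ T f := by
    intro a ha B hB hBpos ε hε
    rcases ha B hB hBpos ε hε with ⟨n, hn⟩
    refine ⟨-n, ?_⟩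
    have hsetmeas : MeasurableSet
        (B ∩ (⇑(T ^ n)) ⁻¹' B ∩ {x : X | |birkhoffZ T f n x - a| < ε}) := by
      exact ((hB.inter ((hzpow n) hB)).inter
        (measurableSet_lt ((hbirk n).sub measurable_const).abs measurable_const))
    have hseteq : (⇑(T ^ (-n))) ⁻¹' (B ∩ (⇑(T ^ n)) ⁻¹' B ∩ {x : X | |birkhoffZ T f n x - a| < ε})
        = B ∩ (⇑(T ^ (-n))) ⁻¹' B ∩ {x : X | |birkhoffZ T f (-n) x - (-a)| < ε} := by
      ext x
      simp only [Set.mem_preimage, Set.mem_inter_iff, Set.mem_setOf_eq]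
      have hTnn : (T ^ n) ((T ^ (-n)) x) = x := by
        have : (T ^ n) ((T ^ (-n)) x) = ((T ^ n) * (T ^ (-n))) x := rfl
        rw [this, ← zpow_add]
        simp
      have hS : birkhoffZ T f n ((T ^ (-n)) x) = -birkhoffZ T f (-n) x := by
        have := birkhoffZ_add T f (-n) n x
        simp only [neg_add_cancel, birkhoffZ_zero] at this
        linarith
      rw [hTnn, hS]
      constructor
      · rintro ⟨⟨h1, h2⟩, h3⟩
        refine ⟨⟨h2, h1⟩, ?_⟩
        have : -birkhoffZ T f (-n) x - a = -(birkhoffZ T f (-n) x - (-a)) := by ring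
        rw [this, abs_neg] at h3
        exact h3
      · rintro ⟨⟨h1, h2⟩, h3⟩
        refine ⟨⟨h2, h1⟩, ?_⟩
        have : -birkhoffZ T f (-n) x - a = -(birkhoffZ T f (-n) x - (-a)) := by ring
        rw [this, abs_neg]
        exact h3
    rw [← hseteq, (hmp (-n)).measure_preimage hsetmeas.nullMeasurableSet]
    exact hn
  -- addition
  have hadd : ∀ a ∈ essentialValues μ T f, ∀ b ∈ essentialValues μ T f,
      a + b ∈ essentialValues μ T f := by
    intro a ha b hb B hB hBpos ε hε
    rcases hb B hB hBpos (ε / 2) (by linarith) with ⟨n, hn⟩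
    set A := B ∩ (⇑(T ^ n)) ⁻¹' B ∩ {x : X | |birkhoffZ T f n x - b| < ε / 2} with hA
    have hAmeas : MeasurableSet A :=
      (hB.inter ((hzpow n) hB)).inter
        (measurableSet_lt ((hbirk n).sub measurable_const).abs measurable_const)
    rcases ha A hAmeas hn (ε / 2) (by linarith) with ⟨m, hm⟩
    refine ⟨m + n, fun h0 => hm (measure_mono_null ?_ h0)⟩
    rintro x ⟨⟨hxA, hxTA⟩, hxS⟩
    have hxB : x ∈ B := hxA.1.1
    have hTmx : (T ^ m) x ∈ A := hxTA
    have hTmxB : (T ^ m) x ∈ (⇑(T ^ n)) ⁻¹' B := hTmx.1.2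
    have hco : (T ^ (m + n)) x = (T ^ n) ((T ^ m) x) := by
      rw [add_comm, zpow_add]
      rfl
    refine ⟨⟨hxB, ?_⟩, ?_⟩
    · show (T ^ (m + n)) x ∈ B
      rw [hco]
      exact hTmxB
    · show |birkhoffZ T f (m + n) x - (a + b)| < ε
      have hSsum := birkhoffZ_add T f m n x
      have h1 : |birkhoffZ T f m x - a| < ε / 2 := hxS
      have h2 : |birkhoffZ T f n ((T ^ m) x) - b| < ε / 2 := hTmx.2
      have : birkhoffZ T f (m + n) x - (a + b)
          = (birkhoffZ T f m x - a) + (birkhoffZ T f n ((T ^ m) x) - b) := by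
        rw [hSsum]; ring
      rw [this]
      calc |(birkhoffZ T f m x - a) + (birkhoffZ T f n ((T ^ m) x) - b)|
          ≤ |birkhoffZ T f m x - a| + |birkhoffZ T f n ((T ^ m) x) - b| := abs_add_le _ _
        _ < ε := by linarith
  refine ⟨hclosed, ⟨{
    carrier := essentialValues μ T f
    zero_mem' := hzero
    add_mem' := fun {x y} hx hy => hadd x hx y hy
    neg_mem' := fun {x} hx => hneg x hx }, rfl⟩⟩
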